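/- arXiv:0908.1989 — 5 statements merged into one kernel-verified Lean document; each statement's English description precedes it below -/
import Mathlib

section
/- Let R be a Z/2-graded ring, and let Q = R[θ₁,…,θₙ,∂₁,…,∂ₙ] where the θᵢ are free supercommuting odd variables, ∂ᵢ = ∂/∂θᵢ (so ∂ᵢθⱼ + θⱼ∂ᵢ = δᵢⱼ, ∂ᵢ∂ⱼ + ∂ⱼ∂ᵢ = 0), and the θ's and ∂'s supercommute with R. Then for any Q-module M, every A ∈ M has a unique expansion A = Σ_μ A_μ θ^μ, where μ ranges over multi-indices of 0's and 1's of length n, and each A_μ lies in the joint annihilator ann(∂₁,…,∂ₙ) ⊆ M. -/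
open scoped BigOperators

def thetaProd {Q : Type*} [Ring Q] (n : ℕ) (θ : Fin n → Q) (μ : Fin n → Bool) : Q :=
  ((List.finRange n).map fun i => if μ i then θ i else 1).prod

section Aux

variable {Q M : Type*} [Ring Q] [AddCommGroup M] [Module Q M]

lemma thetaProd_cons (n : ℕ) (θ : Fin (n+1) → Q) (b : Bool) (ν : Fin n → Bool) :
    thetaProd (n+1) θ (Fin.cons b ν) =
      (if b then θ 0 else 1) * thetaProd n (θ ∘ Fin.succ) ν := by
  simp [thetaProd, List.finRange_succ, List.map_map, Function.comp_def,
    Fin.cons_succ, Fin.cons_zero]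

lemma sum_pi_bool_succ {α : Type*} [AddCommMonoid α] (n : ℕ) (g : (Fin (n+1) → Bool) → α) :
    ∑ μ : Fin (n+1) → Bool, g μ =
      (∑ ν : Fin n → Bool, g (Fin.cons true ν)) + ∑ ν : Fin n → Bool, g (Fin.cons false ν) := by
  rw [← Equiv.sum_comp (Fin.consEquiv fun _ => Bool) g, Fintype.sum_prod_type,
    Fintype.sum_bool]
  simp [Fin.consEquiv]

lemma split_sum (n : ℕ) (θ : Fin (n+1) → Q) (c : (Fin (n+1) → Bool) → M) :
    ∑ μ : Fin (n+1) → Bool, thetaProd (n+1) θ μ • c μ =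
      θ 0 • (∑ ν : Fin n → Bool, thetaProd n (θ ∘ Fin.succ) ν • c (Fin.cons true ν)) +
      ∑ ν : Fin n → Bool, thetaProd n (θ ∘ Fin.succ) ν • c (Fin.cons false ν) := by
  rw [sum_pi_bool_succ, Finset.smul_sum]
  congr 1
  · refine Finset.sum_congr rfl fun ν _ => ?_
    rw [thetaProd_cons]
    simp [mul_smul]
  · refine Finset.sum_congr rfl fun ν _ => ?_
    rw [thetaProd_cons]
    simp

lemma smul_list_prod_eq_zero (q : Q) (L : List Q)
    (h : ∀ x ∈ L, q * x = x * q ∨ q * x = -(x * q))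
    (m : M) (hm : q • m = 0) : q • (L.prod • m) = 0 := by
  induction L with
  | nil => simpa using hm
  | cons x L ih =>
    have hx := h x (List.mem_cons_self (a := x) (l := L))
    have ih' := ih (fun y hy => h y (List.mem_cons_of_mem x hy))
    rw [List.prod_cons, mul_smul, smul_smul]
    rcases hx with hx | hx
    · rw [hx, mul_smul, ih', smul_zero]
    · rw [hx, neg_smul, mul_smul, ih', smul_zero, neg_zero]

lemma exists_aux :
    ∀ (n : ℕ) (θ pd : Fin n → Q),
      (∀ i, pd i * pd i = 0) →
      (∀ i j, i ≠ j → pd i * pd j = -(pd j * pd i)) →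
      (∀ i j, pd i * θ j + θ j * pd i = if i = j then 1 else 0) →
      ∀ (S : AddSubgroup M),
      (∀ i, ∀ m ∈ S, θ i • m ∈ S) →
      (∀ i, ∀ m ∈ S, pd i • m ∈ S) →
      ∀ A ∈ S,
      ∃ c : (Fin n → Bool) → M,
        (∀ μ i, pd i • c μ = 0) ∧ (∀ μ, c μ ∈ S) ∧
        A = ∑ μ : Fin n → Bool, thetaProd n θ μ • c μ := by
  intro n
  induction n with
  | zero =>
    intro θ pd _ _ _ S _ _ A hA
    refine ⟨fun _ => A, fun μ i => i.elim0, fun μ => hA, ?_⟩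
    rw [Fintype.sum_subsingleton _ (fun _ : Fin 0 => false)]
    simp [thetaProd]
  | succ n ih =>
    intro θ pd hpdsq hpdanti hmix S hSθ hSpd A hA
    have hpdθ : ∀ j : Fin n, pd 0 * θ j.succ = -(θ j.succ * pd 0) := by
      intro j
      have h := hmix 0 j.succ
      rw [if_neg (Fin.succ_ne_zero j).symm] at h
      exact eq_neg_of_add_eq_zero_left h
    set S' : AddSubgroup M :=
      S ⊓ (DistribMulAction.toAddMonoidHom M (pd 0)).ker with hS'def
    have hmemS' : ∀ m : M, m ∈ S' ↔ m ∈ S ∧ pd 0 • m = 0 := by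
      intro m
      simp [hS'def, AddSubgroup.mem_inf, AddMonoidHom.mem_ker]
    have hS'θ : ∀ i : Fin n, ∀ m ∈ S', (θ ∘ Fin.succ) i • m ∈ S' := by
      intro i m hm
      obtain ⟨hm1, hm2⟩ := (hmemS' m).1 hm
      refine (hmemS' _).2 ⟨hSθ _ _ hm1, ?_⟩
      show pd 0 • (θ i.succ • m) = 0
      rw [smul_smul, hpdθ i, neg_smul, mul_smul, hm2, smul_zero, neg_zero]
    have hS'pd : ∀ i : Fin n, ∀ m ∈ S', (pd ∘ Fin.succ) i • m ∈ S' := by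
      intro i m hm
      obtain ⟨hm1, hm2⟩ := (hmemS' m).1 hm
      refine (hmemS' _).2 ⟨hSpd _ _ hm1, ?_⟩
      show pd 0 • (pd i.succ • m) = 0
      rw [smul_smul, hpdanti 0 i.succ (Fin.succ_ne_zero i).symm, neg_smul, mul_smul,
        hm2, smul_zero, neg_zero]
    have hpdsq' : ∀ i : Fin n, (pd ∘ Fin.succ) i * (pd ∘ Fin.succ) i = 0 :=
      fun i => hpdsq i.succ
    have hpdanti' : ∀ i j : Fin n, i ≠ j →
        (pd ∘ Fin.succ) i * (pd ∘ Fin.succ) j = -((pd ∘ Fin.succ) j * (pd ∘ Fin.succ) i) :=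
      fun i j hij => hpdanti i.succ j.succ (fun h => hij (Fin.succ_inj.mp h))
    have hmix' : ∀ i j : Fin n, (pd ∘ Fin.succ) i * (θ ∘ Fin.succ) j +
        (θ ∘ Fin.succ) j * (pd ∘ Fin.succ) i = if i = j then 1 else 0 := by
      intro i j
      have h := hmix i.succ j.succ
      simpa [Fin.succ_inj] using h
    have hA0 : (pd 0 * θ 0) • A ∈ S' := by
      refine (hmemS' _).2 ⟨?_, ?_⟩
      · rw [mul_smul]; exact hSpd 0 _ (hSθ 0 A hA)
      · rw [smul_smul, ← mul_assoc, hpdsq 0, zero_mul, zero_smul]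
    have hA1 : pd 0 • A ∈ S' :=
      (hmemS' _).2 ⟨hSpd 0 A hA, by rw [smul_smul, hpdsq 0, zero_smul]⟩
    obtain ⟨c0, hc0pd, hc0S, hc0sum⟩ :=
      ih (θ ∘ Fin.succ) (pd ∘ Fin.succ) hpdsq' hpdanti' hmix' S' hS'θ hS'pd
        ((pd 0 * θ 0) • A) hA0
    obtain ⟨c1, hc1pd, hc1S, hc1sum⟩ :=
      ih (θ ∘ Fin.succ) (pd ∘ Fin.succ) hpdsq' hpdanti' hmix' S' hS'θ hS'pd
        (pd 0 • A) hA1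
    refine ⟨fun μ => if μ 0 then c1 (Fin.tail μ) else c0 (Fin.tail μ), ?_, ?_, ?_⟩
    · intro μ i
      induction i using Fin.cases with
      | zero =>
        by_cases hb : μ 0 = true
        · simp only [hb, if_true]
          exact ((hmemS' _).1 (hc1S _)).2
        · simp only [hb, if_false]
          exact ((hmemS' _).1 (hc0S _)).2
      | succ j =>
        by_cases hb : μ 0 = true
        · simp only [hb, if_true]
          exact hc1pd _ j
        · simp only [hb, if_false]
          exact hc0pd _ j
    · intro μ
      by_cases hb : μ 0 = true
      · simp only [hb, if_true]
        exact ((hmemS' _).1 (hc1S _)).1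
      · simp only [hb, if_false]
        exact ((hmemS' _).1 (hc0S _)).1
    · rw [split_sum]
      simp only [Fin.cons_zero, Fin.tail_cons, if_pos, if_neg, Bool.false_eq_true,
        if_false, if_true]
      rw [← hc0sum, ← hc1sum, smul_smul, ← add_smul]
      have h := hmix 0 0
      rw [if_pos rfl] at h
      rw [add_comm (θ 0 * pd 0), h, one_smul]

lemma uniq_aux :
    ∀ (n : ℕ) (θ pd : Fin n → Q),
      (∀ i j, pd i * θ j + θ j * pd i = if i = j then 1 else 0) →
      ∀ (c : (Fin n → Bool) → M),
        (∀ μ i, pd i • c μ = 0) →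
        (∑ μ : Fin n → Bool, thetaProd n θ μ • c μ = 0) →
        ∀ μ, c μ = 0 := by
  intro n
  induction n with
  | zero =>
    intro θ pd _ c _ hsum μ
    have h := (Fintype.sum_subsingleton
      (fun ν : Fin 0 → Bool => thetaProd 0 θ ν • c ν) μ).symm.trans hsum
    simpa [thetaProd] using h
  | succ n ih =>
    intro θ pd hmix c hcpd hsum μ
    have hpdθ : ∀ j : Fin n, pd 0 * θ j.succ = -(θ j.succ * pd 0) := by
      intro j
      have h := hmix 0 j.succ
      rw [if_neg (Fin.succ_ne_zero j).symm] at h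
      exact eq_neg_of_add_eq_zero_left h
    have hmix' : ∀ i j : Fin n, (pd ∘ Fin.succ) i * (θ ∘ Fin.succ) j +
        (θ ∘ Fin.succ) j * (pd ∘ Fin.succ) i = if i = j then 1 else 0 := by
      intro i j
      have h := hmix i.succ j.succ
      simpa [Fin.succ_inj] using h
    have hkill : ∀ (m : M) (ν : Fin n → Bool), pd 0 • m = 0 →
        pd 0 • (thetaProd n (θ ∘ Fin.succ) ν • m) = 0 := by
      intro m ν hm
      refine smul_list_prod_eq_zero (pd 0) _ ?_ m hm
      intro x hx
      simp only [List.mem_map, List.mem_finRange] at hx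
      obtain ⟨i, _, hi⟩ := hx
      by_cases hb : ν i = true
      · right
        rw [← hi, hb, if_pos rfl]
        exact hpdθ i
      · left
        simp only [Bool.not_eq_true] at hb
        rw [← hi, hb, if_neg (by simp), mul_one, one_mul]
    set B1 : M := ∑ ν : Fin n → Bool, thetaProd n (θ ∘ Fin.succ) ν • c (Fin.cons true ν)
      with hB1def
    set B0 : M := ∑ ν : Fin n → Bool, thetaProd n (θ ∘ Fin.succ) ν • c (Fin.cons false ν)
      with hB0def
    have hsplit : θ 0 • B1 + B0 = 0 := by rw [← split_sum]; exact hsum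
    have hB1pd : pd 0 • B1 = 0 := by
      rw [hB1def, Finset.smul_sum]
      exact Finset.sum_eq_zero fun ν _ => hkill _ ν (hcpd _ 0)
    have hB0pd : pd 0 • B0 = 0 := by
      rw [hB0def, Finset.smul_sum]
      exact Finset.sum_eq_zero fun ν _ => hkill _ ν (hcpd _ 0)
    have h00 := hmix 0 0
    rw [if_pos rfl] at h00
    have hB1 : B1 = 0 := by
      have h := congrArg (fun m : M => pd 0 • m) hsplit
      simp only [smul_add, smul_zero] at h
      rw [hB0pd, add_zero, smul_smul] at h
      calc B1 = ((pd 0 * θ 0) + (θ 0 * pd 0)) • B1 := by rw [h00, one_smul]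
        _ = (pd 0 * θ 0) • B1 + (θ 0 * pd 0) • B1 := add_smul _ _ _
        _ = 0 := by rw [h, mul_smul, hB1pd, smul_zero, add_zero]
    have hB0 : B0 = 0 := by
      have := hsplit
      rwa [hB1, smul_zero, zero_add] at this
    have h1 := ih (θ ∘ Fin.succ) (pd ∘ Fin.succ) hmix'
      (fun ν => c (Fin.cons true ν)) (fun ν i => hcpd _ i.succ) hB1
    have h0 := ih (θ ∘ Fin.succ) (pd ∘ Fin.succ) hmix'
      (fun ν => c (Fin.cons false ν)) (fun ν i => hcpd _ i.succ) hB0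
    have hμ : Fin.cons (μ 0) (Fin.tail μ) = μ := Fin.cons_self_tail μ
    by_cases hb : μ 0 = true
    · rw [← hμ, hb]; exact h1 (Fin.tail μ)
    · simp only [Bool.not_eq_true] at hb
      rw [← hμ, hb]; exact h0 (Fin.tail μ)

end Aux

/-- In the super Weyl algebra `Q = R[θ₁,…,θₙ,∂₁,…,∂ₙ]`
(`θᵢθⱼ = −θⱼθᵢ`, `∂ᵢ∂ⱼ = −∂ⱼ∂ᵢ`, `∂ᵢθⱼ + θⱼ∂ᵢ = δᵢⱼ`), every element `A` of a
`Q`-module `M` has a unique expansion `A = Σ_μ θ^μ • A_μ` with each `A_μ` in the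
joint annihilator of `∂₁,…,∂ₙ`. -/
theorem stmt_2 {Q M : Type*} [Ring Q] [AddCommGroup M] [Module Q M] (n : ℕ)
    (θ pd : Fin n → Q)
    (hθsq : ∀ i, θ i * θ i = 0)
    (hθanti : ∀ i j, i ≠ j → θ i * θ j = -(θ j * θ i))
    (hpdsq : ∀ i, pd i * pd i = 0)
    (hpdanti : ∀ i j, i ≠ j → pd i * pd j = -(pd j * pd i))
    (hmix : ∀ i j, pd i * θ j + θ j * pd i = if i = j then 1 else 0)
    (A : M) :
    ∃! c : (Fin n → Bool) → M,
      (∀ μ i, pd i • c μ = 0) ∧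
      A = ∑ μ : Fin n → Bool, thetaProd n θ μ • c μ := by
  obtain ⟨c, hcpd, -, hcsum⟩ := exists_aux n θ pd hpdsq hpdanti hmix ⊤
    (fun _ _ _ => AddSubgroup.mem_top _) (fun _ _ _ => AddSubgroup.mem_top _)
    A (AddSubgroup.mem_top A)
  refine ⟨c, ⟨hcpd, hcsum⟩, ?_⟩
  rintro c' ⟨hc'pd, hc'sum⟩
  funext μ
  have hz := uniq_aux n θ pd hmix (fun ν => c' ν - c ν)
    (fun ν i => by rw [smul_sub, hcpd, hc'pd, sub_zero])
    (by
      simp only [smul_sub, Finset.sum_sub_distrib]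
      rw [← hcsum, ← hc'sum, sub_self]) μ
  exact sub_eq_zero.mp hz
end

section
/- Let Λ be a supercommutative ring and A = Λ[z,θ,ρ] the superalgebra with z even and θ, ρ odd. Let D = ρ∂_z + ∂_θ. Then the kernel of D acting on A equals the Λ-subalgebra generated by u = z − θρ and ρ. Concretely, an element P + ρQ with P, Q ∈ Λ[z,θ] satisfies D(P + ρQ) = 0 if and only if, writing P = P₀ + θP₁ and Q = Q₀ + θQ₁ with Pᵢ, Qᵢ ∈ Λ[z], one has P₁ = 0 and Q₁ = ∂_zP₀. -/
open Polynomial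

noncomputable section

/-- The polynomial superalgebra `Λ[z,θ,ρ]` (`z` even, `θ, ρ` odd):
an element `a + θb + ρc + θρd` is encoded by its components
`(a, b, c, d)` with `a, b, c, d ∈ Λ[z]`. -/
abbrev A4 (Λ : Type*) [CommRing Λ] :=
  Polynomial Λ × Polynomial Λ × Polynomial Λ × Polynomial Λ

variable {Λ : Type*} [CommRing Λ]

/-- Supercommutative multiplication on `Λ[z,θ,ρ]` (θ² = ρ² = 0, θρ = −ρθ). -/
def mulA (x y : A4 Λ) : A4 Λ :=
  (x.1 * y.1,
   x.1 * y.2.1 + x.2.1 * y.1,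
   x.1 * y.2.2.1 + x.2.2.1 * y.1,
   x.1 * y.2.2.2 + x.2.2.2 * y.1 + x.2.1 * y.2.2.1 - x.2.2.1 * y.2.1)

/-- The identity `1`. -/
def oneA : A4 Λ := (1, 0, 0, 0)
/-- The even coordinate `z`. -/
def zA : A4 Λ := (Polynomial.X, 0, 0, 0)
/-- The odd coordinate `θ`. -/
def thA : A4 Λ := (0, 1, 0, 0)
/-- The odd coordinate `ρ`. -/
def rhA : A4 Λ := (0, 0, 1, 0)
/-- The inclusion of `Λ[z,θ]` (pairs `(f,g)` encoding `f + θg`) into `Λ[z,θ,ρ]`. -/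
def emb (f g : Polynomial Λ) : A4 Λ := (f, g, 0, 0)

/-- The even derivation `∂_z`. -/
def dZ (x : A4 Λ) : A4 Λ :=
  (derivative x.1, derivative x.2.1, derivative x.2.2.1, derivative x.2.2.2)
/-- The odd derivation `∂_θ`. -/
def dTheta (x : A4 Λ) : A4 Λ := (x.2.1, 0, x.2.2.2, 0)
/-- The odd derivation `∂_ρ`. -/
def dRho (x : A4 Λ) : A4 Λ := (x.2.2.1, -x.2.2.2, 0, 0)
/-- The odd vector field `D = ρ∂_z + ∂_θ`. -/
def Dop (x : A4 Λ) : A4 Λ := mulA rhA (dZ x) + dTheta x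

/-- the kernel of `D = ρ∂_z + ∂_θ` on `Λ[z,θ,ρ]` is the subalgebra
generated by `u = z − θρ` and `ρ`.  Concretely, for `P = P₀ + θP₁` and
`Q = Q₀ + θQ₁` with `Pᵢ, Qᵢ ∈ Λ[z]`, the element `P + ρQ` is killed by `D`
iff `P₁ = 0` and `Q₁ = ∂_zP₀`. -/
theorem stmt_7 (P0 P1 Q0 Q1 : Polynomial Λ) :
    Dop (emb P0 P1 + mulA rhA (emb Q0 Q1)) = (0 : A4 Λ)
      ↔ P1 = 0 ∧ Q1 = derivative P0 := by
  simp only [Dop, emb, mulA, rhA, dZ, dTheta, Prod.mk_add_mk, Prod.ext_iff,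
    Prod.fst_zero, Prod.snd_zero, zero_mul, one_mul, mul_zero, add_zero, zero_add,
    zero_sub, sub_zero, derivative_zero, neg_zero, map_add]
  constructor
  · rintro ⟨h1, h2, h3, h4⟩
    exact ⟨by linear_combination h1, by linear_combination -h3⟩
  · rintro ⟨h1, h2⟩
    subst h1 h2
    refine ⟨by ring, trivial, by ring, by simp⟩
end
end

section
/- Let Λ be a supercommutative ring, A = Λ[z,θ,ρ] with z even and θ, ρ odd, and let D = ρ∂_z + ∂_θ. Define τ: Λ[z,θ] → A by τ(h) = h − θ∂_θ(h) + ρ(θ∂_z(h) + ∂_θ(h)). Then: (1) D(τ(h)) = 0 for all h ∈ Λ[z,θ]; (2) τ is injective; (3) every element φ ∈ A with D(φ) = 0 equals τ(h) for a unique h ∈ Λ[z,θ]. -/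
open Polynomial

noncomputable section

variable {Λ : Type*} [CommRing Λ]

/-- `τ(h) = h − θ∂_θh + ρ(θ∂_zh + ∂_θh)` on `Λ[z,θ]` (pairs `(f,g)` = `f + θg`). -/
def tau (f g : Polynomial Λ) : A4 Λ :=
  emb f g - mulA thA (dTheta (emb f g))
    + mulA rhA (mulA thA (dZ (emb f g)) + dTheta (emb f g))

/-- for `τ(h) = h − θ∂_θh + ρ(θ∂_zh + ∂_θh)` on `Λ[z,θ]`:
(1) `D(τ(h)) = 0`; (2) `τ` is injective; (3) every `φ` with `D(φ) = 0` is
`τ(h)` for a unique `h ∈ Λ[z,θ]`. -/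
theorem stmt_9 :
    (∀ f g : Polynomial Λ, Dop (tau f g) = 0) ∧
    (Function.Injective fun p : Polynomial Λ × Polynomial Λ => tau p.1 p.2) ∧
    (∀ φ : A4 Λ, Dop φ = 0 →
      ∃! p : Polynomial Λ × Polynomial Λ, tau p.1 p.2 = φ) := by
  have htau : ∀ f g : Polynomial Λ, tau f g = (f, 0, g, -derivative f) := by
    intro f g
    simp [tau, emb, mulA, thA, rhA, dTheta, dZ, Prod.ext_iff]
  have hD : ∀ x : A4 Λ, Dop x = (x.2.1, 0, x.2.2.2 + derivative x.1, -derivative x.2.1) := by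
    intro x
    simp [Dop, mulA, rhA, dTheta, dZ, Prod.ext_iff, add_comm]
  refine ⟨?_, ?_, ?_⟩
  · intro f g
    simp [htau, hD, Prod.ext_iff]
  · intro ⟨f, g⟩ ⟨f', g'⟩ h
    simp only [htau, Prod.mk.injEq] at h
    simp [Prod.ext_iff, h.1, h.2.2.1]
  · rintro ⟨a, b, c, d⟩ hφ
    rw [hD, Prod.ext_iff, Prod.ext_iff, Prod.ext_iff] at hφ
    obtain ⟨h1, -, h3, h4⟩ := hφ
    simp only [Prod.fst_zero, Prod.snd_zero] at h1 h3 h4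
    refine ⟨(a, c), ?_, ?_⟩
    · simp only [htau, Prod.mk.injEq, eq_self_iff_true, true_and]
      exact ⟨h1.symm, by linear_combination -h3⟩
    · rintro ⟨f, g⟩ h
      simp only [htau, Prod.mk.injEq] at h
      simp [Prod.ext_iff, h.1, h.2.2.1]
end
end

section
/- Let Λ be a supercommutative ring and A = Λ[z,θ,ρ] with z even, θ, ρ odd. Let τ: Λ[z,θ] → A be τ(h) = h − θ∂_θh + ρ(θ∂_zh + ∂_θh), and let ∇̂_ρ = ∂_ρ − θ∂_z. Then for all h ∈ Λ[z,θ]: (1) ∂_z ∘ τ = τ ∘ ∂_z; (2) ∇̂_ρ(τ(h)) = τ(∂_θ h). That is, τ intertwines the derivative ∂_z with ∂_u and the derivative ∂_θ with ∂_ρ in dual coordinates. -/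
open Polynomial

noncomputable section

variable {Λ : Type*} [CommRing Λ]

/-- `∇̂_ρ = ∂_ρ − θ∂_z`. -/
def hatRho (x : A4 Λ) : A4 Λ := dRho x - mulA thA (dZ x)

/-- `τ` intertwines `∂_z` with `∂_u = ∂_z` and `∂_θ` with
`∂_ρ` in dual coordinates: `∂_z(τ(h)) = τ(∂_zh)` and `∇̂_ρ(τ(h)) = τ(∂_θh)`
(for `h = f + θg`, `∂_θh = g`). -/
theorem stmt_11 (f g : Polynomial Λ) :
    dZ (tau f g) = tau (derivative f) (derivative g) ∧
    hatRho (tau f g) = tau g 0 := by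
  constructor <;>
  · simp only [tau, emb, mulA, thA, rhA, dZ, dTheta, dRho, hatRho, Prod.mk_add_mk,
      Prod.mk_sub_mk, Prod.ext_iff]
    simp
end
end

section
/- Let Λ be a supercommutative ring, A = Λ[z,θ,ρ] with z even and θ, ρ odd, and let D = ρ∂_z + ∂_θ with kernel O_{X̂} = ker D ⊆ A. Let I ⊆ ker D be the ideal of ker D generated by ρ. Then (ρ·A) ∩ ker D = I. That is, an element of the form ρg with g ∈ Λ[z,θ] lies in ker D if and only if it lies in the ideal of ker D generated by ρ. -/
open Polynomial

noncomputable section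

variable {Λ : Type*} [CommRing Λ]

/-- with `O_{X̂} = ker D ⊆ Λ[z,θ,ρ]` and `I` the ideal of
`ker D` generated by `ρ` (namely `{ρ·k : D(k) = 0}`), one has
`(ρ·Λ[z,θ,ρ]) ∩ ker D = I`. -/
theorem stmt_17 :
    {x : A4 Λ | (∃ y : A4 Λ, x = mulA rhA y) ∧ Dop x = 0}
      = {x : A4 Λ | ∃ k : A4 Λ, Dop k = 0 ∧ x = mulA rhA k} := by
  ext x
  simp only [Set.mem_setOf_eq]
  constructor
  · rintro ⟨⟨y, rfl⟩, hD⟩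
    have h21 : y.2.1 = 0 := by
      have := congrArg (fun p : A4 Λ => p.2.2.1) hD
      simp [Dop, mulA, rhA, dZ, dTheta] at this
      exact this
    refine ⟨(y.1, 0, 0, -derivative y.1), ?_, ?_⟩
    · simp [Dop, mulA, rhA, dZ, dTheta, Prod.ext_iff]
    · simp [mulA, rhA, h21]
  · rintro ⟨k, hk, rfl⟩
    have h21 : k.2.1 = 0 := by
      have := congrArg (fun p : A4 Λ => p.1) hk
      simpa [Dop, mulA, rhA, dZ, dTheta] using this
    exact ⟨⟨k, rfl⟩, by simp [Dop, mulA, rhA, dZ, dTheta, h21, Prod.ext_iff]⟩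
end
end
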